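/- The poles of the fundamental eigenvalue of the scale-invariant ring, given by solutions of e^{-2ikd} - 2 S_{23} cos θ e^{-ikd} + S_{23}² - S_{22}² = 0 with S_{22} = t-1, S_{23} = t, are characterized by e^{-ikd} = t cos θ ± √(1 - 2t + t² cos²θ); this equation admits a real solution k only if t = 1 or cos θ = ±1. -/

import Mathlib

open Complex

/-- the poles of the fundamental eigenvalue of the scale-invariant ring
satisfy `e^{-ikd} = t cos θ ± √(1 - 2t + t² cos²θ)` (the square root `s` being possibly
imaginary); if such a value is unimodular (i.e. `k` is real), then `t = 1` or
`cos θ = ±1`, for `t ∈ (0,1]`. -/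
theorem stmt11 (t θ : ℝ) (ht : t ∈ Set.Ioc (0:ℝ) 1)
    (z s : ℂ)
    (hs : s^2 = 1 - 2*(t:ℂ) + (t:ℂ)^2 * (Real.cos θ : ℂ)^2)
    (hz : z = (t:ℂ) * (Real.cos θ : ℂ) + s ∨ z = (t:ℂ) * (Real.cos θ : ℂ) - s)
    (huni : ‖z‖ = 1) :
    t = 1 ∨ Real.cos θ = 1 ∨ Real.cos θ = -1 := by
  obtain ⟨ht0, ht1⟩ := ht
  set c := Real.cos θ with hc
  -- imaginary part of s^2 is zero
  have him : (s^2).im = 0 := by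
    rw [hs]; simp [pow_two, Complex.mul_im, Complex.mul_re]
  have hmul : s.re * s.im = 0 := by
    have h := him
    simp [pow_two, Complex.mul_im] at h
    linarith
  have hre : s.re^2 - s.im^2 = 1 - 2*t + t^2*c^2 := by
    have h := congrArg Complex.re hs
    simp [pow_two, Complex.mul_re, Complex.mul_im] at h
    nlinarith [h]
  have habs : z.re^2 + z.im^2 = 1 := by
    have h := Complex.sq_norm z
    rw [huni] at h
    simp [Complex.normSq_apply] at h
    nlinarith [h]
  rcases mul_eq_zero.mp hmul with h0 | h0
  · -- s purely imaginary : t = 1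
    left
    have hzre : z.re = t*c := by
      rcases hz with h | h <;> rw [h] <;> simp [h0]
    have hzim : z.im = s.im ∨ z.im = -s.im := by
      rcases hz with h | h
      · left; rw [h]; simp
      · right; rw [h]; simp
    have him2 : z.im^2 = s.im^2 := by rcases hzim with h | h <;> rw [h] <;> ring
    have h00 : s.re^2 = 0 := by rw [h0]; ring
    have hq : z.re^2 = t^2*c^2 := by rw [hzre]; ring
    linarith [hre, habs, him2, h00, hq]
  · -- s real : cos θ = ±1
    have hzim : z.im = 0 := by
      rcases hz with h | h <;> rw [h] <;> simp [h0]
    have hzre : z.re = t*c + s.re ∨ z.re = t*c - s.re := by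
      rcases hz with h | h
      · left; rw [h]; simp
      · right; rw [h]; simp
    have ha2 : s.re^2 = 1 - 2*t + t^2*c^2 := by
      rw [h0] at hre; linarith [hre]
    have hz1 : z.re^2 = 1 := by rw [hzim] at habs; linarith
    have hca : c * s.re = 1 - t*c^2 ∨ c * s.re = -(1 - t*c^2) := by
      rcases hzre with h | h
      · left
        have hx : (t*c + s.re)^2 = 1 := by rw [← h]; exact hz1
        have ht' : t * (c * s.re - (1 - t*c^2)) = 0 := by
          linear_combination hx/2 - ha2/2
        rcases mul_eq_zero.mp ht' with h' | h'
        · linarith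
        · linarith
      · right
        have hx : (t*c - s.re)^2 = 1 := by rw [← h]; exact hz1
        have ht' : t * (c * s.re + (1 - t*c^2)) = 0 := by
          linear_combination -hx/2 + ha2/2
        rcases mul_eq_zero.mp ht' with h' | h'
        · linarith
        · linarith
    have hc2 : c^2 = 1 := by
      have hsq : c^2 * s.re^2 = (1 - t*c^2)^2 := by
        rcases hca with h | h
        · linear_combination (c*s.re + (1 - t*c^2)) * h
        · linear_combination (c*s.re - (1 - t*c^2)) * h
      rw [ha2] at hsq
      linear_combination hsq
    have : (c - 1) * (c + 1) = 0 := by linear_combination hc2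
    rcases mul_eq_zero.mp this with h | h
    · right; left; linarith
    · right; right; linarith
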